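/- Let 2 ≤ d1 ≤ d2 ≤ d3 ≤ d4, let 2 ≤ s ≤ d1, and let |φ⟩ = Σ a_{ijkr}|ijkr⟩ be a unit vector in ℂ^{d1}⊗ℂ^{d2}⊗ℂ^{d3}⊗ℂ^{d4}. Then C_4²(|φ⟩) ≥ [ (d1−2 choose s−2)(d2−2 choose s−2)(d3−1 choose s−1)(d4−1 choose s−1) ]^{−1} · Σ C_4²(|φ⟩_{s⊗s⊗s⊗s}), where the sum runs over all choices of s-element subsets S_1 ⊆ {1,…,d1}, …, S_4 ⊆ {1,…,d4}, |φ⟩_{s⊗s⊗s⊗s} = Σ_{i∈S_1, j∈S_2, k∈S_3, r∈S_4} a_{ijkr}|ijkr⟩ is the corresponding unnormalized substate, and C_4² of an unnormalized four-partite vector is given by the homogeneous coefficient formula C_4²(ψ) = (1/4) Σ ( |b_{ijkr}b_{pqth} − b_{pjkr}b_{iqth}|² + |b_{ijkr}b_{pqth} − b_{iqkr}b_{pjth}|² + |b_{ijkr}b_{pqth} − b_{ijtr}b_{pqkh}|² + |b_{ijkr}b_{pqth} − b_{ijkh}b_{pqtr}|² + |b_{ijkr}b_{pqth} − b_{pqkr}b_{ijth}|²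 + |b_{ijkr}b_{pqth} − b_{pjtr}b_{iqkh}|² + |b_{ijkr}b_{pqth} − b_{pjkh}b_{iqtr}|² ) over its coefficients b. -/

import Mathlib

open scoped BigOperators

namespace Stmt14

/-- The (unnormalized) projector `|v⟩⟨v|` associated to a vector `v`. -/
noncomputable def outer {I : Type*} (v : I → ℂ) : Matrix I I ℂ :=
  Matrix.of fun x y => v x * (starRingEnd ℂ) (v y)

variable {d1 d2 d3 d4 : ℕ}

/-- `tr(ρ_α²)` for `α = {1}`. -/
noncomputable def t1sq
    (ρ : Matrix (Fin d1 × Fin d2 × Fin d3 × Fin d4) (Fin d1 × Fin d2 × Fin d3 × Fin d4) ℂ) : ℂ :=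
  ∑ i, ∑ p, (∑ j, ∑ k, ∑ r, ρ (i, j, k, r) (p, j, k, r)) * (∑ j, ∑ k, ∑ r, ρ (p, j, k, r) (i, j, k, r))

/-- `tr(ρ_α²)` for `α = {2}`. -/
noncomputable def t2sq
    (ρ : Matrix (Fin d1 × Fin d2 × Fin d3 × Fin d4) (Fin d1 × Fin d2 × Fin d3 × Fin d4) ℂ) : ℂ :=
  ∑ j, ∑ q, (∑ i, ∑ k, ∑ r, ρ (i, j, k, r) (i, q, k, r)) * (∑ i, ∑ k, ∑ r, ρ (i, q, k, r) (i, j, k, r))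

/-- `tr(ρ_α²)` for `α = {3}`. -/
noncomputable def t3sq
    (ρ : Matrix (Fin d1 × Fin d2 × Fin d3 × Fin d4) (Fin d1 × Fin d2 × Fin d3 × Fin d4) ℂ) : ℂ :=
  ∑ k, ∑ t, (∑ i, ∑ j, ∑ r, ρ (i, j, k, r) (i, j, t, r)) * (∑ i, ∑ j, ∑ r, ρ (i, j, t, r) (i, j, k, r))

/-- `tr(ρ_α²)` for `α = {4}`. -/
noncomputable def t4sq
    (ρ : Matrix (Fin d1 × Fin d2 × Fin d3 × Fin d4) (Fin d1 × Fin d2 × Fin d3 × Fin d4) ℂ) : ℂ :=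
  ∑ r, ∑ h, (∑ i, ∑ j, ∑ k, ρ (i, j, k, r) (i, j, k, h)) * (∑ i, ∑ j, ∑ k, ρ (i, j, k, h) (i, j, k, r))

/-- `tr(ρ_α²)` for `α = {1,2}`. -/
noncomputable def t12sq
    (ρ : Matrix (Fin d1 × Fin d2 × Fin d3 × Fin d4) (Fin d1 × Fin d2 × Fin d3 × Fin d4) ℂ) : ℂ :=
  ∑ i, ∑ p, ∑ j, ∑ q, (∑ k, ∑ r, ρ (i, j, k, r) (p, q, k, r)) * (∑ k, ∑ r, ρ (p, q, k, r) (i, j, k, r))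

/-- `tr(ρ_α²)` for `α = {1,3}`. -/
noncomputable def t13sq
    (ρ : Matrix (Fin d1 × Fin d2 × Fin d3 × Fin d4) (Fin d1 × Fin d2 × Fin d3 × Fin d4) ℂ) : ℂ :=
  ∑ i, ∑ p, ∑ k, ∑ t, (∑ j, ∑ r, ρ (i, j, k, r) (p, j, t, r)) * (∑ j, ∑ r, ρ (p, j, t, r) (i, j, k, r))

/-- `tr(ρ_α²)` for `α = {1,4}`. -/
noncomputable def t14sq
    (ρ : Matrix (Fin d1 × Fin d2 × Fin d3 × Fin d4) (Fin d1 × Fin d2 × Fin d3 × Fin d4) ℂ) : ℂ :=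
  ∑ i, ∑ p, ∑ r, ∑ h, (∑ j, ∑ k, ρ (i, j, k, r) (p, j, k, h)) * (∑ j, ∑ k, ρ (p, j, k, h) (i, j, k, r))

/-- `tr(ρ_α²)` for `α = {2,3}`. -/
noncomputable def t23sq
    (ρ : Matrix (Fin d1 × Fin d2 × Fin d3 × Fin d4) (Fin d1 × Fin d2 × Fin d3 × Fin d4) ℂ) : ℂ :=
  ∑ j, ∑ q, ∑ k, ∑ t, (∑ i, ∑ r, ρ (i, j, k, r) (i, q, t, r)) * (∑ i, ∑ r, ρ (i, q, t, r) (i, j, k, r))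

/-- `tr(ρ_α²)` for `α = {2,4}`. -/
noncomputable def t24sq
    (ρ : Matrix (Fin d1 × Fin d2 × Fin d3 × Fin d4) (Fin d1 × Fin d2 × Fin d3 × Fin d4) ℂ) : ℂ :=
  ∑ j, ∑ q, ∑ r, ∑ h, (∑ i, ∑ k, ρ (i, j, k, r) (i, q, k, h)) * (∑ i, ∑ k, ρ (i, q, k, h) (i, j, k, r))

/-- `tr(ρ_α²)` for `α = {3,4}`. -/
noncomputable def t34sq
    (ρ : Matrix (Fin d1 × Fin d2 × Fin d3 × Fin d4) (Fin d1 × Fin d2 × Fin d3 × Fin d4) ℂ) : ℂ :=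
  ∑ k, ∑ t, ∑ r, ∑ h, (∑ i, ∑ j, ρ (i, j, k, r) (i, j, t, h)) * (∑ i, ∑ j, ρ (i, j, t, h) (i, j, k, r))

/-- `tr(ρ_α²)` for `α = {1,2,3}`. -/
noncomputable def t123sq
    (ρ : Matrix (Fin d1 × Fin d2 × Fin d3 × Fin d4) (Fin d1 × Fin d2 × Fin d3 × Fin d4) ℂ) : ℂ :=
  ∑ i, ∑ p, ∑ j, ∑ q, ∑ k, ∑ t, (∑ r, ρ (i, j, k, r) (p, q, t, r)) * (∑ r, ρ (p, q, t, r) (i, j, k, r))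

/-- `tr(ρ_α²)` for `α = {1,2,4}`. -/
noncomputable def t124sq
    (ρ : Matrix (Fin d1 × Fin d2 × Fin d3 × Fin d4) (Fin d1 × Fin d2 × Fin d3 × Fin d4) ℂ) : ℂ :=
  ∑ i, ∑ p, ∑ j, ∑ q, ∑ r, ∑ h, (∑ k, ρ (i, j, k, r) (p, q, k, h)) * (∑ k, ρ (p, q, k, h) (i, j, k, r))

/-- `tr(ρ_α²)` for `α = {1,3,4}`. -/
noncomputable def t134sq
    (ρ : Matrix (Fin d1 × Fin d2 × Fin d3 × Fin d4) (Fin d1 × Fin d2 × Fin d3 × Fin d4) ℂ) : ℂ :=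
  ∑ i, ∑ p, ∑ k, ∑ t, ∑ r, ∑ h, (∑ j, ρ (i, j, k, r) (p, j, t, h)) * (∑ j, ρ (p, j, t, h) (i, j, k, r))

/-- `tr(ρ_α²)` for `α = {2,3,4}`. -/
noncomputable def t234sq
    (ρ : Matrix (Fin d1 × Fin d2 × Fin d3 × Fin d4) (Fin d1 × Fin d2 × Fin d3 × Fin d4) ℂ) : ℂ :=
  ∑ j, ∑ q, ∑ k, ∑ t, ∑ r, ∑ h, (∑ i, ρ (i, j, k, r) (i, q, t, h)) * (∑ i, ρ (i, q, t, h) (i, j, k, r))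

/-- Four-partite pure-state concurrence
`C₄(|φ⟩) = 2^{1−4/2} √((2⁴−2) − Σ_α tr(ρ_α²))`, where `α` runs over the
fourteen nonempty proper subsets of `{1,2,3,4}`. -/
noncomputable def pureC4 (φ : Fin d1 × Fin d2 × Fin d3 × Fin d4 → ℂ) : ℝ :=
  (2 : ℝ) ^ ((1 : ℝ) - (4 : ℝ) / 2) *
    Real.sqrt (((2 : ℝ) ^ (4 : ℕ) - 2) -
      (t1sq (outer φ) +
        t2sq (outer φ) +
        t3sq (outer φ) +
        t4sq (outer φ) +
        t12sq (outer φ) +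
        t13sq (outer φ) +
        t14sq (outer φ) +
        t23sq (outer φ) +
        t24sq (outer φ) +
        t34sq (outer φ) +
        t123sq (outer φ) +
        t124sq (outer φ) +
        t134sq (outer φ) +
        t234sq (outer φ)).re)


/-- Squared concurrence of a (possibly unnormalized) four-partite vector,
given by the homogeneous seven-term coefficient formula. -/
noncomputable def C4sqCoeff {n1 n2 n3 n4 : ℕ}
    (b : Fin n1 × Fin n2 × Fin n3 × Fin n4 → ℂ) : ℝ :=
  (1 / 4) * ∑ i, ∑ p, ∑ j, ∑ q, ∑ k, ∑ t, ∑ r, ∑ h,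
    (‖b (i, j, k, r) * b (p, q, t, h) - b (p, j, k, r) * b (i, q, t, h)‖ ^ 2 +
     ‖b (i, j, k, r) * b (p, q, t, h) - b (i, q, k, r) * b (p, j, t, h)‖ ^ 2 +
     ‖b (i, j, k, r) * b (p, q, t, h) - b (i, j, t, r) * b (p, q, k, h)‖ ^ 2 +
     ‖b (i, j, k, r) * b (p, q, t, h) - b (i, j, k, h) * b (p, q, t, r)‖ ^ 2 +
     ‖b (i, j, k, r) * b (p, q, t, h) - b (p, q, k, r) * b (i, j, t, h)‖ ^ 2 +
     ‖b (i, j, k, r) * b (p, q, t, h) - b (p, j, t, r) * b (i, q, k, h)‖ ^ 2 +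
     ‖b (i, j, k, r) * b (p, q, t, h) - b (p, j, k, h) * b (i, q, t, r)‖ ^ 2)


/-- The (unnormalized) `s⊗s⊗s⊗s` substate of a four-partite vector `a`
determined by `s`-element subsets `S₁, S₂, S₃, S₄` of the four factors. -/
noncomputable def subvec {s : ℕ} (a : Fin d1 × Fin d2 × Fin d3 × Fin d4 → ℂ)
    (S1 : Finset (Fin d1)) (S2 : Finset (Fin d2))
    (S3 : Finset (Fin d3)) (S4 : Finset (Fin d4))
    (h1 : S1.card = s) (h2 : S2.card = s) (h3 : S3.card = s) (h4 : S4.card = s) :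
    Fin s × Fin s × Fin s × Fin s → ℂ :=
  fun x => a (S1.orderEmbOfFin h1 x.1, S2.orderEmbOfFin h2 x.2.1,
              S3.orderEmbOfFin h3 x.2.2.1, S4.orderEmbOfFin h4 x.2.2.2)


section Aux

lemma flat {α β : Type*} {γ : Type*} [Fintype α] [Fintype β] [AddCommMonoid γ] (f : α → β → γ) :
    ∑ a : α, ∑ b : β, f a b = ∑ z : α × β, f z.1 z.2 :=
  (Fintype.sum_prod_type (fun z => f z.1 z.2)).symm

abbrev Idx4 (d1 d2 d3 d4 : ℕ) := Fin d1 × Fin d2 × Fin d3 × Fin d4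
abbrev BIdx (d1 d2 d3 d4 : ℕ) :=
  Fin d1 × Fin d1 × Fin d2 × Fin d2 × Fin d3 × Fin d3 × Fin d4 × Fin d4

@[simp] def eqv0 : BIdx d1 d2 d3 d4 ≃ (Idx4 d1 d2 d3 d4 × Idx4 d1 d2 d3 d4) :=
  ⟨fun (i,p,j,q,k,t,r,h) => ((i,j,k,r),(p,q,t,h)),
   fun ((i,j,k,r),(p,q,t,h)) => (i,p,j,q,k,t,r,h), fun _ => rfl, fun _ => rfl⟩

@[simp] def eqv1 : BIdx d1 d2 d3 d4 ≃ (Idx4 d1 d2 d3 d4 × Idx4 d1 d2 d3 d4) :=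
  ⟨fun (i,p,j,q,k,t,r,h) => ((p,j,k,r),(i,q,t,h)),
   fun ((p,j,k,r),(i,q,t,h)) => (i,p,j,q,k,t,r,h), fun _ => rfl, fun _ => rfl⟩

@[simp] def eqv2 : BIdx d1 d2 d3 d4 ≃ (Idx4 d1 d2 d3 d4 × Idx4 d1 d2 d3 d4) :=
  ⟨fun (i,p,j,q,k,t,r,h) => ((i,q,k,r),(p,j,t,h)),
   fun ((i,q,k,r),(p,j,t,h)) => (i,p,j,q,k,t,r,h), fun _ => rfl, fun _ => rfl⟩

@[simp] def eqv3 : BIdx d1 d2 d3 d4 ≃ (Idx4 d1 d2 d3 d4 × Idx4 d1 d2 d3 d4) :=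
  ⟨fun (i,p,j,q,k,t,r,h) => ((i,j,t,r),(p,q,k,h)),
   fun ((i,j,t,r),(p,q,k,h)) => (i,p,j,q,k,t,r,h), fun _ => rfl, fun _ => rfl⟩

@[simp] def eqv4 : BIdx d1 d2 d3 d4 ≃ (Idx4 d1 d2 d3 d4 × Idx4 d1 d2 d3 d4) :=
  ⟨fun (i,p,j,q,k,t,r,h) => ((i,j,k,h),(p,q,t,r)),
   fun ((i,j,k,h),(p,q,t,r)) => (i,p,j,q,k,t,r,h), fun _ => rfl, fun _ => rfl⟩

@[simp] def eqv5 : BIdx d1 d2 d3 d4 ≃ (Idx4 d1 d2 d3 d4 × Idx4 d1 d2 d3 d4) :=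
  ⟨fun (i,p,j,q,k,t,r,h) => ((p,q,k,r),(i,j,t,h)),
   fun ((p,q,k,r),(i,j,t,h)) => (i,p,j,q,k,t,r,h), fun _ => rfl, fun _ => rfl⟩

@[simp] def eqv6 : BIdx d1 d2 d3 d4 ≃ (Idx4 d1 d2 d3 d4 × Idx4 d1 d2 d3 d4) :=
  ⟨fun (i,p,j,q,k,t,r,h) => ((p,j,t,r),(i,q,k,h)),
   fun ((p,j,t,r),(i,q,k,h)) => (i,p,j,q,k,t,r,h), fun _ => rfl, fun _ => rfl⟩

@[simp] def eqv7 : BIdx d1 d2 d3 d4 ≃ (Idx4 d1 d2 d3 d4 × Idx4 d1 d2 d3 d4) :=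
  ⟨fun (i,p,j,q,k,t,r,h) => ((p,j,k,h),(i,q,t,r)),
   fun ((p,j,k,h),(i,q,t,r)) => (i,p,j,q,k,t,r,h), fun _ => rfl, fun _ => rfl⟩


noncomputable def wm (a : Idx4 d1 d2 d3 d4 → ℂ)
    (E : BIdx d1 d2 d3 d4 ≃ (Idx4 d1 d2 d3 d4 × Idx4 d1 d2 d3 d4)) : ℂ :=
  ∑ z, (a (eqv0 z).1 * a (eqv0 z).2) * (starRingEnd ℂ) (a (E z).1 * a (E z).2)

set_option maxHeartbeats 2000000 in
lemma master (a : Idx4 d1 d2 d3 d4 → ℂ) (ha : ∑ x, Complex.normSq (a x) = 1)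
    (E E' : BIdx d1 d2 d3 d4 ≃ (Idx4 d1 d2 d3 d4 × Idx4 d1 d2 d3 d4)) :
    ∑ z, Complex.normSq (a (E z).1 * a (E z).2 - a (E' z).1 * a (E' z).2)
      = 2 - 2 * (∑ z, (a (E z).1 * a (E z).2) * (starRingEnd ℂ) (a (E' z).1 * a (E' z).2)).re := by
  have key : ∀ (F : BIdx d1 d2 d3 d4 ≃ (Idx4 d1 d2 d3 d4 × Idx4 d1 d2 d3 d4)),
      ∑ z, Complex.normSq (a (F z).1 * a (F z).2) = 1 := by
    intro F
    calc ∑ z, Complex.normSq (a (F z).1 * a (F z).2)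
        = ∑ w : Idx4 d1 d2 d3 d4 × Idx4 d1 d2 d3 d4, Complex.normSq (a w.1 * a w.2) :=
          Equiv.sum_comp F (fun w => Complex.normSq (a w.1 * a w.2))
      _ = (∑ x, Complex.normSq (a x)) * (∑ y, Complex.normSq (a y)) := by
          rw [Finset.sum_mul_sum]
          simp [Fintype.sum_prod_type, Complex.normSq_mul]
      _ = 1 := by rw [ha, one_mul]
  simp only [Complex.normSq_sub, Finset.sum_add_distrib, Finset.sum_sub_distrib, key,
    Complex.re_sum, ← Finset.mul_sum]
  rw [← Complex.re_sum]
  ring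

set_option maxHeartbeats 4000000 in
lemma t1_eq (a : Idx4 d1 d2 d3 d4 → ℂ) : t1sq (outer a) = wm a eqv1 := by
  simp only [t1sq, outer, Matrix.of_apply, Finset.sum_mul, Finset.mul_sum, flat, wm]
  refine (Fintype.sum_equiv
    ⟨fun (i,p,j,q,k,t,r,h) => (i, p, (q,t,h), (j,k,r)),
     fun (i, p, (q,t,h), (j,k,r)) => (i,p,j,q,k,t,r,h), fun _ => rfl, fun _ => rfl⟩ _ _ ?_).symm
  rintro ⟨i,p,j,q,k,t,r,h⟩
  simp only [eqv0, eqv1, Equiv.coe_fn_mk, map_mul]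
  ring

set_option maxHeartbeats 4000000 in
lemma t2_eq (a : Idx4 d1 d2 d3 d4 → ℂ) : t2sq (outer a) = wm a eqv2 := by
  simp only [t2sq, outer, Matrix.of_apply, Finset.sum_mul, Finset.mul_sum, flat, wm]
  refine (Fintype.sum_equiv
    ⟨fun (i,p,j,q,k,t,r,h) => (j, q, (p,t,h), (i,k,r)),
     fun (j, q, (p,t,h), (i,k,r)) => (i,p,j,q,k,t,r,h), fun _ => rfl, fun _ => rfl⟩ _ _ ?_).symm
  rintro ⟨i,p,j,q,k,t,r,h⟩
  simp only [eqv0, eqv2, Equiv.coe_fn_mk, map_mul]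
  ring

set_option maxHeartbeats 4000000 in
lemma t3_eq (a : Idx4 d1 d2 d3 d4 → ℂ) : t3sq (outer a) = wm a eqv3 := by
  simp only [t3sq, outer, Matrix.of_apply, Finset.sum_mul, Finset.mul_sum, flat, wm]
  refine (Fintype.sum_equiv
    ⟨fun (i,p,j,q,k,t,r,h) => (k, t, (p,q,h), (i,j,r)),
     fun (k, t, (p,q,h), (i,j,r)) => (i,p,j,q,k,t,r,h), fun _ => rfl, fun _ => rfl⟩ _ _ ?_).symm
  rintro ⟨i,p,j,q,k,t,r,h⟩
  simp only [eqv0, eqv3, Equiv.coe_fn_mk, map_mul]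
  ring

set_option maxHeartbeats 4000000 in
lemma t4_eq (a : Idx4 d1 d2 d3 d4 → ℂ) : t4sq (outer a) = wm a eqv4 := by
  simp only [t4sq, outer, Matrix.of_apply, Finset.sum_mul, Finset.mul_sum, flat, wm]
  refine (Fintype.sum_equiv
    ⟨fun (i,p,j,q,k,t,r,h) => (r, h, (p,q,t), (i,j,k)),
     fun (r, h, (p,q,t), (i,j,k)) => (i,p,j,q,k,t,r,h), fun _ => rfl, fun _ => rfl⟩ _ _ ?_).symm
  rintro ⟨i,p,j,q,k,t,r,h⟩
  simp only [eqv0, eqv4, Equiv.coe_fn_mk, map_mul]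
  ring

set_option maxHeartbeats 4000000 in
lemma t12_eq (a : Idx4 d1 d2 d3 d4 → ℂ) : t12sq (outer a) = wm a eqv5 := by
  simp only [t12sq, outer, Matrix.of_apply, Finset.sum_mul, Finset.mul_sum, flat, wm]
  refine (Fintype.sum_equiv
    ⟨fun (i,p,j,q,k,t,r,h) => (i, p, j, q, (t,h), (k,r)),
     fun (i, p, j, q, (t,h), (k,r)) => (i,p,j,q,k,t,r,h), fun _ => rfl, fun _ => rfl⟩ _ _ ?_).symm
  rintro ⟨i,p,j,q,k,t,r,h⟩
  simp only [eqv0, eqv5, Equiv.coe_fn_mk, map_mul]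
  ring

set_option maxHeartbeats 4000000 in
lemma t13_eq (a : Idx4 d1 d2 d3 d4 → ℂ) : t13sq (outer a) = wm a eqv6 := by
  simp only [t13sq, outer, Matrix.of_apply, Finset.sum_mul, Finset.mul_sum, flat, wm]
  refine (Fintype.sum_equiv
    ⟨fun (i,p,j,q,k,t,r,h) => (i, p, k, t, (q,h), (j,r)),
     fun (i, p, k, t, (q,h), (j,r)) => (i,p,j,q,k,t,r,h), fun _ => rfl, fun _ => rfl⟩ _ _ ?_).symm
  rintro ⟨i,p,j,q,k,t,r,h⟩
  simp only [eqv0, eqv6, Equiv.coe_fn_mk, map_mul]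
  ring

set_option maxHeartbeats 4000000 in
lemma t14_eq (a : Idx4 d1 d2 d3 d4 → ℂ) : t14sq (outer a) = wm a eqv7 := by
  simp only [t14sq, outer, Matrix.of_apply, Finset.sum_mul, Finset.mul_sum, flat, wm]
  refine (Fintype.sum_equiv
    ⟨fun (i,p,j,q,k,t,r,h) => (i, p, r, h, (q,t), (j,k)),
     fun (i, p, r, h, (q,t), (j,k)) => (i,p,j,q,k,t,r,h), fun _ => rfl, fun _ => rfl⟩ _ _ ?_).symm
  rintro ⟨i,p,j,q,k,t,r,h⟩
  simp only [eqv0, eqv7, Equiv.coe_fn_mk, map_mul]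
  ring

set_option maxHeartbeats 4000000 in
lemma t23_eq (a : Idx4 d1 d2 d3 d4 → ℂ) : t23sq (outer a) = wm a eqv7 := by
  simp only [t23sq, outer, Matrix.of_apply, Finset.sum_mul, Finset.mul_sum, flat, wm]
  refine (Fintype.sum_equiv
    ⟨fun (i,p,j,q,k,t,r,h) => (j, q, k, t, (p,h), (i,r)),
     fun (j, q, k, t, (p,h), (i,r)) => (i,p,j,q,k,t,r,h), fun _ => rfl, fun _ => rfl⟩ _ _ ?_).symm
  rintro ⟨i,p,j,q,k,t,r,h⟩
  simp only [eqv0, eqv7, Equiv.coe_fn_mk, map_mul]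
  ring

set_option maxHeartbeats 4000000 in
lemma t24_eq (a : Idx4 d1 d2 d3 d4 → ℂ) : t24sq (outer a) = wm a eqv6 := by
  simp only [t24sq, outer, Matrix.of_apply, Finset.sum_mul, Finset.mul_sum, flat, wm]
  refine (Fintype.sum_equiv
    ⟨fun (i,p,j,q,k,t,r,h) => (j, q, r, h, (p,t), (i,k)),
     fun (j, q, r, h, (p,t), (i,k)) => (i,p,j,q,k,t,r,h), fun _ => rfl, fun _ => rfl⟩ _ _ ?_).symm
  rintro ⟨i,p,j,q,k,t,r,h⟩
  simp only [eqv0, eqv6, Equiv.coe_fn_mk, map_mul]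
  ring

set_option maxHeartbeats 4000000 in
lemma t34_eq (a : Idx4 d1 d2 d3 d4 → ℂ) : t34sq (outer a) = wm a eqv5 := by
  simp only [t34sq, outer, Matrix.of_apply, Finset.sum_mul, Finset.mul_sum, flat, wm]
  refine (Fintype.sum_equiv
    ⟨fun (i,p,j,q,k,t,r,h) => (k, t, r, h, (p,q), (i,j)),
     fun (k, t, r, h, (p,q), (i,j)) => (i,p,j,q,k,t,r,h), fun _ => rfl, fun _ => rfl⟩ _ _ ?_).symm
  rintro ⟨i,p,j,q,k,t,r,h⟩
  simp only [eqv0, eqv5, Equiv.coe_fn_mk, map_mul]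
  ring

set_option maxHeartbeats 4000000 in
lemma t123_eq (a : Idx4 d1 d2 d3 d4 → ℂ) : t123sq (outer a) = wm a eqv4 := by
  simp only [t123sq, outer, Matrix.of_apply, Finset.sum_mul, Finset.mul_sum, flat, wm]
  refine (Fintype.sum_equiv
    ⟨fun (i,p,j,q,k,t,r,h) => (i, p, j, q, k, t, h, r),
     fun (i, p, j, q, k, t, h, r) => (i,p,j,q,k,t,r,h), fun _ => rfl, fun _ => rfl⟩ _ _ ?_).symm
  rintro ⟨i,p,j,q,k,t,r,h⟩
  simp only [eqv0, eqv4, Equiv.coe_fn_mk, map_mul]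
  ring

set_option maxHeartbeats 4000000 in
lemma t124_eq (a : Idx4 d1 d2 d3 d4 → ℂ) : t124sq (outer a) = wm a eqv3 := by
  simp only [t124sq, outer, Matrix.of_apply, Finset.sum_mul, Finset.mul_sum, flat, wm]
  refine (Fintype.sum_equiv
    ⟨fun (i,p,j,q,k,t,r,h) => (i, p, j, q, r, h, t, k),
     fun (i, p, j, q, r, h, t, k) => (i,p,j,q,k,t,r,h), fun _ => rfl, fun _ => rfl⟩ _ _ ?_).symm
  rintro ⟨i,p,j,q,k,t,r,h⟩
  simp only [eqv0, eqv3, Equiv.coe_fn_mk, map_mul]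
  ring

set_option maxHeartbeats 4000000 in
lemma t134_eq (a : Idx4 d1 d2 d3 d4 → ℂ) : t134sq (outer a) = wm a eqv2 := by
  simp only [t134sq, outer, Matrix.of_apply, Finset.sum_mul, Finset.mul_sum, flat, wm]
  refine (Fintype.sum_equiv
    ⟨fun (i,p,j,q,k,t,r,h) => (i, p, k, t, r, h, q, j),
     fun (i, p, k, t, r, h, q, j) => (i,p,j,q,k,t,r,h), fun _ => rfl, fun _ => rfl⟩ _ _ ?_).symm
  rintro ⟨i,p,j,q,k,t,r,h⟩
  simp only [eqv0, eqv2, Equiv.coe_fn_mk, map_mul]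
  ring

set_option maxHeartbeats 4000000 in
lemma t234_eq (a : Idx4 d1 d2 d3 d4 → ℂ) : t234sq (outer a) = wm a eqv1 := by
  simp only [t234sq, outer, Matrix.of_apply, Finset.sum_mul, Finset.mul_sum, flat, wm]
  refine (Fintype.sum_equiv
    ⟨fun (i,p,j,q,k,t,r,h) => (j, q, k, t, r, h, p, i),
     fun (j, q, k, t, r, h, p, i) => (i,p,j,q,k,t,r,h), fun _ => rfl, fun _ => rfl⟩ _ _ ?_).symm
  rintro ⟨i,p,j,q,k,t,r,h⟩
  simp only [eqv0, eqv1, Equiv.coe_fn_mk, map_mul]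
  ring


set_option maxHeartbeats 4000000 in
lemma stepA (a : Idx4 d1 d2 d3 d4 → ℂ) (ha : ∑ x, Complex.normSq (a x) = 1) :
    (((2 : ℝ) ^ (4 : ℕ) - 2) -
      (t1sq (outer a) +
        t2sq (outer a) +
        t3sq (outer a) +
        t4sq (outer a) +
        t12sq (outer a) +
        t13sq (outer a) +
        t14sq (outer a) +
        t23sq (outer a) +
        t24sq (outer a) +
        t34sq (outer a) +
        t123sq (outer a) +
        t124sq (outer a) +
        t134sq (outer a) +
        t234sq (outer a)).re) = 4 * C4sqCoeff a := by
  have e1 := master a ha eqv0 eqv1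
  have e2 := master a ha eqv0 eqv2
  have e3 := master a ha eqv0 eqv3
  have e4 := master a ha eqv0 eqv4
  have e5 := master a ha eqv0 eqv5
  have e6 := master a ha eqv0 eqv6
  have e7 := master a ha eqv0 eqv7
  have hC : C4sqCoeff a = (1/4) * (
      (∑ z, Complex.normSq (a (eqv0 z).1 * a (eqv0 z).2 - a (eqv1 z).1 * a (eqv1 z).2)) +
      (∑ z, Complex.normSq (a (eqv0 z).1 * a (eqv0 z).2 - a (eqv2 z).1 * a (eqv2 z).2)) +
      (∑ z, Complex.normSq (a (eqv0 z).1 * a (eqv0 z).2 - a (eqv3 z).1 * a (eqv3 z).2)) +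
      (∑ z, Complex.normSq (a (eqv0 z).1 * a (eqv0 z).2 - a (eqv4 z).1 * a (eqv4 z).2)) +
      (∑ z, Complex.normSq (a (eqv0 z).1 * a (eqv0 z).2 - a (eqv5 z).1 * a (eqv5 z).2)) +
      (∑ z, Complex.normSq (a (eqv0 z).1 * a (eqv0 z).2 - a (eqv6 z).1 * a (eqv6 z).2)) +
      (∑ z, Complex.normSq (a (eqv0 z).1 * a (eqv0 z).2 - a (eqv7 z).1 * a (eqv7 z).2))) := by
    simp only [C4sqCoeff, Complex.sq_norm, Finset.sum_add_distrib, flat]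
    rfl
  rw [t1_eq a, t2_eq a, t3_eq a, t4_eq a, t12_eq a, t13_eq a, t14_eq a, t23_eq a, t24_eq a,
    t34_eq a, t123_eq a, t124_eq a, t134_eq a, t234_eq a, hC, e1, e2, e3, e4, e5, e6, e7]
  simp only [wm, Complex.add_re]
  norm_num
  ring

lemma C4_nonneg {n1 n2 n3 n4 : ℕ} (b : Fin n1 × Fin n2 × Fin n3 × Fin n4 → ℂ) :
    0 ≤ C4sqCoeff b := by
  unfold C4sqCoeff
  positivity

lemma pure_eq (a : Idx4 d1 d2 d3 d4 → ℂ) (ha : ∑ x, Complex.normSq (a x) = 1) :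
    pureC4 a ^ 2 = C4sqCoeff a := by
  have h4 := stepA a ha
  have hnn := C4_nonneg a
  unfold pureC4
  rw [mul_pow, Real.sq_sqrt (by rw [h4]; linarith), h4]
  have hpow : (2:ℝ) ^ ((1:ℝ) - (4:ℝ)/2) = 1/2 := by
    rw [show ((1:ℝ) - (4:ℝ)/2) = ((-1 : ℤ) : ℝ) by norm_num, Real.rpow_intCast]
    norm_num
  rw [hpow]
  ring

/-! ### Step B: substate sums -/

lemma card_supersets {α : Type*} [Fintype α] [DecidableEq α] (T : Finset α) {s : ℕ}
    (hT : T.card ≤ s) :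
    (Finset.univ.filter (fun S : Finset α => S.card = s ∧ T ⊆ S)).card
      = (Fintype.card α - T.card).choose (s - T.card) := by
  rw [← Finset.card_compl T, ← Finset.card_powersetCard (s - T.card) Tᶜ]
  apply Finset.card_nbij' (fun S => S \ T) (fun U => U ∪ T)
  · intro S hS
    simp only [Finset.mem_coe, Finset.mem_filter, Finset.mem_univ, true_and] at hS
    rw [Finset.mem_coe, Finset.mem_powersetCard]
    constructor
    · intro y hy
      simp only [Finset.mem_sdiff] at hy
      simp [hy.2]
    · rw [Finset.card_sdiff_of_subset hS.2, hS.1]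
  · intro U hU
    rw [Finset.mem_coe, Finset.mem_powersetCard] at hU
    have hdisj : Disjoint U T := by
      refine Finset.disjoint_left.mpr fun x hx hxT => ?_
      have := hU.1 hx
      simp [hxT] at this
    simp only [Finset.mem_coe, Finset.mem_filter, Finset.mem_univ, true_and]
    constructor
    · rw [Finset.card_union_of_disjoint hdisj, hU.2]
      omega
    · exact Finset.subset_union_right
  · intro S hS
    simp only [Finset.mem_coe, Finset.mem_filter, Finset.mem_univ, true_and] at hS
    exact Finset.sdiff_union_of_subset hS.2
  · intro U hU
    rw [Finset.mem_coe, Finset.mem_powersetCard] at hU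
    apply Finset.union_sdiff_cancel_right
    refine Finset.disjoint_left.mpr fun x hx hxT => ?_
    have := hU.1 hx
    simp [hxT] at this

noncomputable def ind {d : ℕ} (s : ℕ) (x y : Fin d) (S : Finset (Fin d)) : ℝ :=
  if S.card = s ∧ x ∈ S ∧ y ∈ S then 1 else 0

noncomputable def cnt (d s : ℕ) {d' : ℕ} (x y : Fin d') : ℝ :=
  if x = y then ((d-1).choose (s-1) : ℝ) else ((d-2).choose (s-2) : ℝ)

lemma sum_ind {d s : ℕ} (hs : 2 ≤ s) (hsd : s ≤ d) (x y : Fin d) :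
    ∑ S : Finset (Fin d), ind s x y S = cnt d s x y := by
  unfold ind cnt
  rw [Finset.sum_boole]
  by_cases hxy : x = y
  · subst hxy
    rw [if_pos rfl]
    have h : ∀ S : Finset (Fin d), (S.card = s ∧ x ∈ S ∧ x ∈ S) ↔ (S.card = s ∧ ({x} : Finset (Fin d)) ⊆ S) := by
      intro S; simp
    rw [Finset.filter_congr (fun S _ => h S)]
    rw [card_supersets ({x} : Finset (Fin d)) (by simp; omega)]
    simp
  · rw [if_neg hxy]
    have h : ∀ S : Finset (Fin d), (S.card = s ∧ x ∈ S ∧ y ∈ S) ↔ (S.card = s ∧ ({x, y} : Finset (Fin d)) ⊆ S) := by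
      intro S; simp [Finset.insert_subset_iff]
    rw [Finset.filter_congr (fun S _ => h S)]
    rw [card_supersets ({x, y} : Finset (Fin d)) (by rw [Finset.card_pair hxy]; omega)]
    rw [Finset.card_pair hxy]
    simp

noncomputable def gA (a : Idx4 d1 d2 d3 d4 → ℂ)
    (E : BIdx d1 d2 d3 d4 ≃ (Idx4 d1 d2 d3 d4 × Idx4 d1 d2 d3 d4))
    (z : BIdx d1 d2 d3 d4) : ℝ :=
  Complex.normSq (a (eqv0 z).1 * a (eqv0 z).2 - a (E z).1 * a (E z).2)

noncomputable def Gg (a : Idx4 d1 d2 d3 d4 → ℂ) (z : BIdx d1 d2 d3 d4) : ℝ :=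
  gA a eqv1 z + gA a eqv2 z + gA a eqv3 z + gA a eqv4 z + gA a eqv5 z + gA a eqv6 z + gA a eqv7 z

set_option maxHeartbeats 2000000 in
lemma C4_eq_G (a : Idx4 d1 d2 d3 d4 → ℂ) : C4sqCoeff a = (1/4) * ∑ z, Gg a z := by
  simp only [C4sqCoeff, Complex.sq_norm, flat]
  rfl

lemma sum_emb {d s : ℕ} (S : Finset (Fin d)) (hS : S.card = s) (f : Fin d → ℝ) :
    ∑ x : Fin s, f (S.orderEmbOfFin hS x) = ∑ y : Fin d, if y ∈ S then f y else 0 := by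
  rw [Finset.sum_ite_mem, Finset.univ_inter]
  rw [← Finset.sum_coe_sort S f]
  refine Fintype.sum_equiv (S.orderIsoOfFin hS).toEquiv _ _ fun x => ?_
  congr 1

def embB {s : ℕ} (S1 : Finset (Fin d1)) (S2 : Finset (Fin d2)) (S3 : Finset (Fin d3))
    (S4 : Finset (Fin d4)) (h1 : S1.card = s) (h2 : S2.card = s) (h3 : S3.card = s)
    (h4 : S4.card = s) : BIdx s s s s → BIdx d1 d2 d3 d4 :=
  fun z =>
    (S1.orderEmbOfFin h1 z.1, S1.orderEmbOfFin h1 z.2.1, S2.orderEmbOfFin h2 z.2.2.1,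
     S2.orderEmbOfFin h2 z.2.2.2.1, S3.orderEmbOfFin h3 z.2.2.2.2.1, S3.orderEmbOfFin h3 z.2.2.2.2.2.1,
     S4.orderEmbOfFin h4 z.2.2.2.2.2.2.1, S4.orderEmbOfFin h4 z.2.2.2.2.2.2.2)

set_option maxHeartbeats 2000000 in
lemma subvec_expand {s : ℕ} (a : Idx4 d1 d2 d3 d4 → ℂ) (S1 : Finset (Fin d1))
    (S2 : Finset (Fin d2)) (S3 : Finset (Fin d3)) (S4 : Finset (Fin d4))
    (h1 : S1.card = s) (h2 : S2.card = s) (h3 : S3.card = s) (h4 : S4.card = s) :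
    C4sqCoeff (subvec a S1 S2 S3 S4 h1 h2 h3 h4)
      = (1/4) * ∑ z : BIdx s s s s, Gg a (embB S1 S2 S3 S4 h1 h2 h3 h4 z) := by
  simp only [C4sqCoeff, subvec, Complex.sq_norm, flat]
  rfl

noncomputable def IP {s : ℕ} (S1 : Finset (Fin d1)) (S2 : Finset (Fin d2))
    (S3 : Finset (Fin d3)) (S4 : Finset (Fin d4)) (z : BIdx d1 d2 d3 d4) : ℝ :=
  ind s z.1 z.2.1 S1 * ind s z.2.2.1 z.2.2.2.1 S2 * ind s z.2.2.2.2.1 z.2.2.2.2.2.1 S3 *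
    ind s z.2.2.2.2.2.2.1 z.2.2.2.2.2.2.2 S4

set_option maxHeartbeats 2000000 in
lemma sub_to_ind {s : ℕ} (hs : 0 < s) (a : Idx4 d1 d2 d3 d4 → ℂ) (S1 : Finset (Fin d1))
    (S2 : Finset (Fin d2)) (S3 : Finset (Fin d3)) (S4 : Finset (Fin d4))
    (h1 : S1.card = s) (h2 : S2.card = s) (h3 : S3.card = s) (h4 : S4.card = s) :
    ∑ z : BIdx s s s s, Gg a (embB S1 S2 S3 S4 h1 h2 h3 h4 z)
      = ∑ z : BIdx d1 d2 d3 d4, IP (s := s) S1 S2 S3 S4 z * Gg a z := by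
  classical
  haveI : Nonempty (Fin s) := ⟨⟨0, hs⟩⟩
  have step1 : ∑ z : BIdx d1 d2 d3 d4, IP (s := s) S1 S2 S3 S4 z * Gg a z
      = ∑ z ∈ Finset.univ.filter (fun z : BIdx d1 d2 d3 d4 =>
          z.1 ∈ S1 ∧ z.2.1 ∈ S1 ∧ z.2.2.1 ∈ S2 ∧ z.2.2.2.1 ∈ S2 ∧ z.2.2.2.2.1 ∈ S3 ∧
          z.2.2.2.2.2.1 ∈ S3 ∧ z.2.2.2.2.2.2.1 ∈ S4 ∧ z.2.2.2.2.2.2.2 ∈ S4), Gg a z := by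
    rw [Finset.sum_filter]
    refine Finset.sum_congr rfl fun z _ => ?_
    simp only [IP, ind, h1, h2, h3, h4, true_and]
    split_ifs <;> simp_all <;> ring
  rw [step1]
  have L1 : ∀ x, Function.invFun (S1.orderEmbOfFin h1) (S1.orderEmbOfFin h1 x) = x :=
    Function.leftInverse_invFun (S1.orderEmbOfFin h1).injective
  have L2 : ∀ x, Function.invFun (S2.orderEmbOfFin h2) (S2.orderEmbOfFin h2 x) = x :=
    Function.leftInverse_invFun (S2.orderEmbOfFin h2).injective
  have L3 : ∀ x, Function.invFun (S3.orderEmbOfFin h3) (S3.orderEmbOfFin h3 x) = x :=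
    Function.leftInverse_invFun (S3.orderEmbOfFin h3).injective
  have L4 : ∀ x, Function.invFun (S4.orderEmbOfFin h4) (S4.orderEmbOfFin h4 x) = x :=
    Function.leftInverse_invFun (S4.orderEmbOfFin h4).injective
  have R1 : ∀ y ∈ S1, S1.orderEmbOfFin h1 (Function.invFun (S1.orderEmbOfFin h1) y) = y := by
    intro y hy
    refine Function.invFun_eq ?_
    have : (y : Fin d1) ∈ Set.range (S1.orderEmbOfFin h1) := by
      rw [Finset.range_orderEmbOfFin]; exact hy
    exact this
  have R2 : ∀ y ∈ S2, S2.orderEmbOfFin h2 (Function.invFun (S2.orderEmbOfFin h2) y) = y := by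
    intro y hy
    refine Function.invFun_eq ?_
    have : (y : Fin d2) ∈ Set.range (S2.orderEmbOfFin h2) := by
      rw [Finset.range_orderEmbOfFin]; exact hy
    exact this
  have R3 : ∀ y ∈ S3, S3.orderEmbOfFin h3 (Function.invFun (S3.orderEmbOfFin h3) y) = y := by
    intro y hy
    refine Function.invFun_eq ?_
    have : (y : Fin d3) ∈ Set.range (S3.orderEmbOfFin h3) := by
      rw [Finset.range_orderEmbOfFin]; exact hy
    exact this
  have R4 : ∀ y ∈ S4, S4.orderEmbOfFin h4 (Function.invFun (S4.orderEmbOfFin h4) y) = y := by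
    intro y hy
    refine Function.invFun_eq ?_
    have : (y : Fin d4) ∈ Set.range (S4.orderEmbOfFin h4) := by
      rw [Finset.range_orderEmbOfFin]; exact hy
    exact this
  refine Finset.sum_nbij' (embB S1 S2 S3 S4 h1 h2 h3 h4)
    (fun z => (Function.invFun (S1.orderEmbOfFin h1) z.1,
      Function.invFun (S1.orderEmbOfFin h1) z.2.1,
      Function.invFun (S2.orderEmbOfFin h2) z.2.2.1,
      Function.invFun (S2.orderEmbOfFin h2) z.2.2.2.1,
      Function.invFun (S3.orderEmbOfFin h3) z.2.2.2.2.1,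
      Function.invFun (S3.orderEmbOfFin h3) z.2.2.2.2.2.1,
      Function.invFun (S4.orderEmbOfFin h4) z.2.2.2.2.2.2.1,
      Function.invFun (S4.orderEmbOfFin h4) z.2.2.2.2.2.2.2)) ?_ ?_ ?_ ?_ ?_
  · intro w _
    simp [embB, Finset.orderEmbOfFin_mem]
  · intro z _
    simp
  · intro w _
    simp [embB, L1, L2, L3, L4]
  · intro z hz
    simp only [Finset.mem_filter, Finset.mem_univ, true_and] at hz
    obtain ⟨m1, m2, m3, m4, m5, m6, m7, m8⟩ := hz
    simp only [embB]
    rw [R1 _ m1, R1 _ m2, R2 _ m3, R2 _ m4, R3 _ m5, R3 _ m6, R4 _ m7, R4 _ m8]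
  · intro w _
    rfl

lemma sum_prod4 {W1 W2 W3 W4 : Type*} [Fintype W1] [Fintype W2] [Fintype W3] [Fintype W4]
    (f1 : W1 → ℝ) (f2 : W2 → ℝ) (f3 : W3 → ℝ) (f4 : W4 → ℝ) (c : ℝ) :
    ∑ w : W1 × W2 × W3 × W4, f1 w.1 * f2 w.2.1 * f3 w.2.2.1 * f4 w.2.2.2 * c
      = (∑ x, f1 x) * (∑ x, f2 x) * (∑ x, f3 x) * (∑ x, f4 x) * c := by
  have e : ∑ w : W1 × W2 × W3 × W4, f1 w.1 * f2 w.2.1 * f3 w.2.2.1 * f4 w.2.2.2 * c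
      = ∑ w1, ∑ w2, ∑ w3, ∑ w4, f1 w1 * (f2 w2 * (f3 w3 * (f4 w4 * c))) := by
    simp only [Fintype.sum_prod_type]
    exact Finset.sum_congr rfl fun w1 _ => Finset.sum_congr rfl fun w2 _ =>
      Finset.sum_congr rfl fun w3 _ => Finset.sum_congr rfl fun w4 _ => by ring
  rw [e]
  simp only [← Finset.mul_sum, ← Finset.sum_mul]
  ring

noncomputable def NB (d1 d2 d3 d4 s : ℕ) : ℝ :=
  ((Nat.choose (d1 - 2) (s - 2) * Nat.choose (d2 - 2) (s - 2) *
      Nat.choose (d3 - 1) (s - 1) * Nat.choose (d4 - 1) (s - 1) : ℕ) : ℝ)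

noncomputable def MT (d1 d2 d3 d4 s : ℕ) (z : BIdx d1 d2 d3 d4) : ℝ :=
  cnt d1 s z.1 z.2.1 * cnt d2 s z.2.2.1 z.2.2.2.1 * cnt d3 s z.2.2.2.2.1 z.2.2.2.2.2.1 *
    cnt d4 s z.2.2.2.2.2.2.1 z.2.2.2.2.2.2.2

set_option maxHeartbeats 3000000 in
lemma exchange {s : ℕ} (hs : 2 ≤ s) (hsd1 : s ≤ d1) (hsd2 : s ≤ d2) (hsd3 : s ≤ d3)
    (hsd4 : s ≤ d4) (a : Idx4 d1 d2 d3 d4 → ℂ) :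
    (∑ S1 : Finset (Fin d1), ∑ S2 : Finset (Fin d2),
        ∑ S3 : Finset (Fin d3), ∑ S4 : Finset (Fin d4),
        if h : S1.card = s ∧ S2.card = s ∧ S3.card = s ∧ S4.card = s then
          C4sqCoeff (subvec a S1 S2 S3 S4 h.1 h.2.1 h.2.2.1 h.2.2.2)
        else 0)
      = (1/4) * ∑ z : BIdx d1 d2 d3 d4, MT d1 d2 d3 d4 s z * Gg a z := by
  have hdite : ∀ (S1 : Finset (Fin d1)) (S2 : Finset (Fin d2)) (S3 : Finset (Fin d3))
      (S4 : Finset (Fin d4)),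
      (if h : S1.card = s ∧ S2.card = s ∧ S3.card = s ∧ S4.card = s then
          C4sqCoeff (subvec a S1 S2 S3 S4 h.1 h.2.1 h.2.2.1 h.2.2.2)
        else 0)
        = (1/4) * ∑ z : BIdx d1 d2 d3 d4, IP (s := s) S1 S2 S3 S4 z * Gg a z := by
    intro S1 S2 S3 S4
    by_cases hc : S1.card = s ∧ S2.card = s ∧ S3.card = s ∧ S4.card = s
    · rw [dif_pos hc, subvec_expand, sub_to_ind (by omega) a S1 S2 S3 S4 hc.1 hc.2.1 hc.2.2.1 hc.2.2.2]
    · rw [dif_neg hc]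
      have h' : ¬S1.card = s ∨ ¬S2.card = s ∨ ¬S3.card = s ∨ ¬S4.card = s := by tauto
      symm
      rcases h' with h|h|h|h <;>
        · simp only [IP, ind, h, false_and, if_false, zero_mul, mul_zero,
            Finset.sum_const_zero, mul_zero]
  simp only [flat]
  simp only [hdite]
  rw [← Finset.mul_sum]
  congr 1
  rw [Finset.sum_comm]
  refine Finset.sum_congr rfl fun z _ => ?_
  have hptw : ∀ w : Finset (Fin d1) × Finset (Fin d2) × Finset (Fin d3) × Finset (Fin d4),
      IP (s := s) w.1 w.2.1 w.2.2.1 w.2.2.2 z * Gg a z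
        = ind s z.1 z.2.1 w.1 * ind s z.2.2.1 z.2.2.2.1 w.2.1 *
          ind s z.2.2.2.2.1 z.2.2.2.2.2.1 w.2.2.1 *
          ind s z.2.2.2.2.2.2.1 z.2.2.2.2.2.2.2 w.2.2.2 * Gg a z := fun w => rfl
  simp only [hptw]
  rw [sum_prod4 (fun S => ind s z.1 z.2.1 S) (fun S => ind s z.2.2.1 z.2.2.2.1 S)
    (fun S => ind s z.2.2.2.2.1 z.2.2.2.2.2.1 S)
    (fun S => ind s z.2.2.2.2.2.2.1 z.2.2.2.2.2.2.2 S) (Gg a z),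
    sum_ind hs hsd1, sum_ind hs hsd2, sum_ind hs hsd3, sum_ind hs hsd4]
  rfl

/-! ### binomial bounds -/

lemma fact1 {s d : ℕ} (hs : 2 ≤ s) (hd : 2 ≤ d) :
    (d-2).choose (s-2) ≤ (d-1).choose (s-1) := by
  have h1 : d - 1 = (d-2) + 1 := by omega
  have h2 : s - 1 = (s-2) + 1 := by omega
  rw [h1, h2, Nat.choose_succ_succ]
  exact Nat.le_add_right _ _

lemma fact2aux {s d : ℕ} (hs : 2 ≤ s) (hd : 2 ≤ d) :
    (s-1) * (d-1).choose (s-1) = (d-1) * (d-2).choose (s-2) := by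
  have h := Nat.add_one_mul_choose_eq (d-2) (s-2)
  have h1 : d - 2 + 1 = d - 1 := by omega
  have h2 : s - 2 + 1 = s - 1 := by omega
  rw [h1, h2] at h
  rw [mul_comm] at h ⊢
  rw [← h, mul_comm]

lemma fact2 {s du dv : ℕ} (hs : 2 ≤ s) (hdu : 2 ≤ du) (huv : du ≤ dv) :
    (du-1).choose (s-1) * (dv-2).choose (s-2) ≤ (du-2).choose (s-2) * (dv-1).choose (s-1) := by
  have hdv : 2 ≤ dv := hdu.trans huv
  have key : (s-1) * ((du-1).choose (s-1) * (dv-2).choose (s-2))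
      ≤ (s-1) * ((du-2).choose (s-2) * (dv-1).choose (s-1)) := by
    calc (s-1) * ((du-1).choose (s-1) * (dv-2).choose (s-2))
        = ((s-1) * (du-1).choose (s-1)) * (dv-2).choose (s-2) := by ring
      _ = ((du-1) * (du-2).choose (s-2)) * (dv-2).choose (s-2) := by rw [fact2aux hs hdu]
      _ ≤ ((dv-1) * (du-2).choose (s-2)) * (dv-2).choose (s-2) := by
          have : du - 1 ≤ dv - 1 := by omega
          exact Nat.mul_le_mul_right _ (Nat.mul_le_mul_right _ this)
      _ = (du-2).choose (s-2) * ((dv-1) * (dv-2).choose (s-2)) := by ring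
      _ = (du-2).choose (s-2) * ((s-1) * (dv-1).choose (s-1)) := by rw [fact2aux hs hdv]
      _ = (s-1) * ((du-2).choose (s-2) * (dv-1).choose (s-1)) := by ring
  exact Nat.le_of_mul_le_mul_left key (by omega)

section Bounds
variable {s : ℕ} (hd1 : 2 ≤ d1) (hd12 : d1 ≤ d2) (hd23 : d2 ≤ d3) (hd34 : d3 ≤ d4)
  (hs : 2 ≤ s)

local notation "A" d => Nat.choose (d-2) (s-2)
local notation "B" d => Nat.choose (d-1) (s-1)

include hd1 hd12 hd23 hd34 hs

lemma bound12 (c3 c4 : ℕ) (h3 : c3 = (A d3) ∨ c3 = (B d3)) (h4 : c4 = (A d4) ∨ c4 = (B d4)) :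
    (A d1) * (A d2) * c3 * c4 ≤ (A d1) * (A d2) * (B d3) * (B d4) := by
  have f3 : c3 ≤ B d3 := by
    rcases h3 with h|h
    · subst h; exact fact1 hs (by omega)
    · omega
  have f4 : c4 ≤ B d4 := by
    rcases h4 with h|h
    · subst h; exact fact1 hs (by omega)
    · omega
  exact Nat.mul_le_mul (Nat.mul_le_mul_left _ f3) f4

lemma bound13 (c2 c4 : ℕ) (h2 : c2 = (A d2) ∨ c2 = (B d2)) (h4 : c4 = (A d4) ∨ c4 = (B d4)) :
    (A d1) * c2 * (A d3) * c4 ≤ (A d1) * (A d2) * (B d3) * (B d4) := by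
  have h23 : c2 * (A d3) ≤ (A d2) * (B d3) := by
    rcases h2 with h|h
    · subst h; exact Nat.mul_le_mul_left _ (fact1 hs (by omega))
    · subst h; exact fact2 hs (by omega) hd23
  have f4 : c4 ≤ B d4 := by
    rcases h4 with h|h
    · subst h; exact fact1 hs (by omega)
    · omega
  calc (A d1) * c2 * (A d3) * c4 = (A d1) * (c2 * (A d3)) * c4 := by ring
    _ ≤ (A d1) * ((A d2) * (B d3)) * (B d4) :=
        Nat.mul_le_mul (Nat.mul_le_mul_left _ h23) f4
    _ = (A d1) * (A d2) * (B d3) * (B d4) := by ring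

lemma bound14 (c2 c3 : ℕ) (h2 : c2 = (A d2) ∨ c2 = (B d2)) (h3 : c3 = (A d3) ∨ c3 = (B d3)) :
    (A d1) * c2 * c3 * (A d4) ≤ (A d1) * (A d2) * (B d3) * (B d4) := by
  have h24 : c2 * (A d4) ≤ (A d2) * (B d4) := by
    rcases h2 with h|h
    · subst h; exact Nat.mul_le_mul_left _ (fact1 hs (by omega))
    · subst h; exact fact2 hs (by omega) (by omega)
  have f3 : c3 ≤ B d3 := by
    rcases h3 with h|h
    · subst h; exact fact1 hs (by omega)
    · omega
  calc (A d1) * c2 * c3 * (A d4) = (A d1) * (c2 * (A d4)) * c3 := by ring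
    _ ≤ (A d1) * ((A d2) * (B d4)) * (B d3) :=
        Nat.mul_le_mul (Nat.mul_le_mul_left _ h24) f3
    _ = (A d1) * (A d2) * (B d3) * (B d4) := by ring

lemma bound23 (c1 c4 : ℕ) (h1 : c1 = (A d1) ∨ c1 = (B d1)) (h4 : c4 = (A d4) ∨ c4 = (B d4)) :
    c1 * (A d2) * (A d3) * c4 ≤ (A d1) * (A d2) * (B d3) * (B d4) := by
  have h13 : c1 * (A d3) ≤ (A d1) * (B d3) := by
    rcases h1 with h|h
    · subst h; exact Nat.mul_le_mul_left _ (fact1 hs (by omega))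
    · subst h; exact fact2 hs hd1 (by omega)
  have f4 : c4 ≤ B d4 := by
    rcases h4 with h|h
    · subst h; exact fact1 hs (by omega)
    · omega
  calc c1 * (A d2) * (A d3) * c4 = (c1 * (A d3)) * (A d2) * c4 := by ring
    _ ≤ ((A d1) * (B d3)) * (A d2) * (B d4) :=
        Nat.mul_le_mul (Nat.mul_le_mul_right _ h13) f4
    _ = (A d1) * (A d2) * (B d3) * (B d4) := by ring

lemma bound24 (c1 c3 : ℕ) (h1 : c1 = (A d1) ∨ c1 = (B d1)) (h3 : c3 = (A d3) ∨ c3 = (B d3)) :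
    c1 * (A d2) * c3 * (A d4) ≤ (A d1) * (A d2) * (B d3) * (B d4) := by
  have h14 : c1 * (A d4) ≤ (A d1) * (B d4) := by
    rcases h1 with h|h
    · subst h; exact Nat.mul_le_mul_left _ (fact1 hs (by omega))
    · subst h; exact fact2 hs hd1 (by omega)
  have f3 : c3 ≤ B d3 := by
    rcases h3 with h|h
    · subst h; exact fact1 hs (by omega)
    · omega
  calc c1 * (A d2) * c3 * (A d4) = (c1 * (A d4)) * (A d2) * c3 := by ring
    _ ≤ ((A d1) * (B d4)) * (A d2) * (B d3) :=
        Nat.mul_le_mul (Nat.mul_le_mul_right _ h14) f3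
    _ = (A d1) * (A d2) * (B d3) * (B d4) := by ring

lemma bound34 (c1 c2 : ℕ) (h1 : c1 = (A d1) ∨ c1 = (B d1)) (h2 : c2 = (A d2) ∨ c2 = (B d2)) :
    c1 * c2 * (A d3) * (A d4) ≤ (A d1) * (A d2) * (B d3) * (B d4) := by
  have h13 : c1 * (A d3) ≤ (A d1) * (B d3) := by
    rcases h1 with h|h
    · subst h; exact Nat.mul_le_mul_left _ (fact1 hs (by omega))
    · subst h; exact fact2 hs hd1 (by omega)
  have h24 : c2 * (A d4) ≤ (A d2) * (B d4) := by
    rcases h2 with h|h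
    · subst h; exact Nat.mul_le_mul_left _ (fact1 hs (by omega))
    · subst h; exact fact2 hs (by omega) (by omega)
  calc c1 * c2 * (A d3) * (A d4) = (c1 * (A d3)) * (c2 * (A d4)) := by ring
    _ ≤ ((A d1) * (B d3)) * ((A d2) * (B d4)) := Nat.mul_le_mul h13 h24
    _ = (A d1) * (A d2) * (B d3) * (B d4) := by ring

lemma boundAll (c1 c2 c3 c4 : ℕ)
    (e1 : c1 = (A d1) ∨ c1 = (B d1)) (e2 : c2 = (A d2) ∨ c2 = (B d2))
    (e3 : c3 = (A d3) ∨ c3 = (B d3)) (e4 : c4 = (A d4) ∨ c4 = (B d4))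
    (hdiff : (c1 = (A d1) ∧ c2 = (A d2)) ∨ (c1 = (A d1) ∧ c3 = (A d3)) ∨
      (c1 = (A d1) ∧ c4 = (A d4)) ∨ (c2 = (A d2) ∧ c3 = (A d3)) ∨
      (c2 = (A d2) ∧ c4 = (A d4)) ∨ (c3 = (A d3) ∧ c4 = (A d4))) :
    c1 * c2 * c3 * c4 ≤ (A d1) * (A d2) * (B d3) * (B d4) := by
  rcases hdiff with ⟨p1,p2⟩|⟨p1,p2⟩|⟨p1,p2⟩|⟨p1,p2⟩|⟨p1,p2⟩|⟨p1,p2⟩ <;> subst p1 <;> subst p2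
  · exact bound12 hd1 hd12 hd23 hd34 hs c3 c4 e3 e4
  · exact bound13 hd1 hd12 hd23 hd34 hs c2 c4 e2 e4
  · exact bound14 hd1 hd12 hd23 hd34 hs c2 c3 e2 e3
  · exact bound23 hd1 hd12 hd23 hd34 hs c1 c4 e1 e4
  · exact bound24 hd1 hd12 hd23 hd34 hs c1 c3 e1 e3
  · exact bound34 hd1 hd12 hd23 hd34 hs c1 c2 e1 e2

lemma MT_le (x1 y1 : Fin d1) (x2 y2 : Fin d2) (x3 y3 : Fin d3) (x4 y4 : Fin d4)
    (hdiff : (x1 ≠ y1 ∧ x2 ≠ y2) ∨ (x1 ≠ y1 ∧ x3 ≠ y3) ∨ (x1 ≠ y1 ∧ x4 ≠ y4) ∨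
      (x2 ≠ y2 ∧ x3 ≠ y3) ∨ (x2 ≠ y2 ∧ x4 ≠ y4) ∨ (x3 ≠ y3 ∧ x4 ≠ y4)) :
    cnt d1 s x1 y1 * cnt d2 s x2 y2 * cnt d3 s x3 y3 * cnt d4 s x4 y4
      ≤ NB d1 d2 d3 d4 s := by
  unfold cnt NB
  push_cast
  simp only [← apply_ite (fun n : ℕ => (n : ℝ))]
  have hb := boundAll hd1 hd12 hd23 hd34 hs
    (if x1 = y1 then (B d1) else (A d1)) (if x2 = y2 then (B d2) else (A d2))
    (if x3 = y3 then (B d3) else (A d3)) (if x4 = y4 then (B d4) else (A d4))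
    (by split_ifs with hh
        · exact Or.inr rfl
        · exact Or.inl rfl)
    (by split_ifs with hh
        · exact Or.inr rfl
        · exact Or.inl rfl)
    (by split_ifs with hh
        · exact Or.inr rfl
        · exact Or.inl rfl)
    (by split_ifs with hh
        · exact Or.inr rfl
        · exact Or.inl rfl)
    (by rcases hdiff with ⟨u,v⟩|⟨u,v⟩|⟨u,v⟩|⟨u,v⟩|⟨u,v⟩|⟨u,v⟩
        · exact Or.inl ⟨if_neg u, if_neg v⟩
        · exact Or.inr (Or.inl ⟨if_neg u, if_neg v⟩)
        · exact Or.inr (Or.inr (Or.inl ⟨if_neg u, if_neg v⟩))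
        · exact Or.inr (Or.inr (Or.inr (Or.inl ⟨if_neg u, if_neg v⟩)))
        · exact Or.inr (Or.inr (Or.inr (Or.inr (Or.inl ⟨if_neg u, if_neg v⟩))))
        · exact Or.inr (Or.inr (Or.inr (Or.inr (Or.inr ⟨if_neg u, if_neg v⟩)))))
  exact_mod_cast hb

end Bounds

set_option maxHeartbeats 2000000 in
lemma tb {s : ℕ} (hd1 : 2 ≤ d1) (hd12 : d1 ≤ d2) (hd23 : d2 ≤ d3) (hd34 : d3 ≤ d4)
    (hs : 2 ≤ s) (a : Idx4 d1 d2 d3 d4 → ℂ) (z : BIdx d1 d2 d3 d4) :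
    MT d1 d2 d3 d4 s z * Gg a z ≤ NB d1 d2 d3 d4 s * Gg a z := by
  obtain ⟨i,p,j,q,k,t,r,h⟩ := z
  have hg : ∀ E, (0:ℝ) ≤ gA a E (i,p,j,q,k,t,r,h) := fun E => Complex.normSq_nonneg _
  have hm1 : MT d1 d2 d3 d4 s (i,p,j,q,k,t,r,h) * gA a eqv1 (i,p,j,q,k,t,r,h)
      ≤ NB d1 d2 d3 d4 s * gA a eqv1 (i,p,j,q,k,t,r,h) := by
    by_cases e1 : i = p
    · have hz : gA a eqv1 (i,p,j,q,k,t,r,h) = 0 := by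
        subst e1
        simp [gA, eqv0, eqv1, mul_comm]
      rw [hz, mul_zero, mul_zero]
    · by_cases e2 : j = q ∧ k = t ∧ r = h
      · have hz : gA a eqv1 (i,p,j,q,k,t,r,h) = 0 := by
          obtain ⟨g1, g2, g3⟩ := e2; subst g1; subst g2; subst g3
          simp [gA, eqv0, eqv1, mul_comm]
        rw [hz, mul_zero, mul_zero]
      · refine mul_le_mul_of_nonneg_right ?_ (hg _)
        exact MT_le hd1 hd12 hd23 hd34 hs i p j q k t r h (by tauto)
  have hm2 : MT d1 d2 d3 d4 s (i,p,j,q,k,t,r,h) * gA a eqv2 (i,p,j,q,k,t,r,h)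
      ≤ NB d1 d2 d3 d4 s * gA a eqv2 (i,p,j,q,k,t,r,h) := by
    by_cases e1 : j = q
    · have hz : gA a eqv2 (i,p,j,q,k,t,r,h) = 0 := by
        subst e1
        simp [gA, eqv0, eqv2, mul_comm]
      rw [hz, mul_zero, mul_zero]
    · by_cases e2 : i = p ∧ k = t ∧ r = h
      · have hz : gA a eqv2 (i,p,j,q,k,t,r,h) = 0 := by
          obtain ⟨g1, g2, g3⟩ := e2; subst g1; subst g2; subst g3
          simp [gA, eqv0, eqv2, mul_comm]
        rw [hz, mul_zero, mul_zero]
      · refine mul_le_mul_of_nonneg_right ?_ (hg _)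
        exact MT_le hd1 hd12 hd23 hd34 hs i p j q k t r h (by tauto)
  have hm3 : MT d1 d2 d3 d4 s (i,p,j,q,k,t,r,h) * gA a eqv3 (i,p,j,q,k,t,r,h)
      ≤ NB d1 d2 d3 d4 s * gA a eqv3 (i,p,j,q,k,t,r,h) := by
    by_cases e1 : k = t
    · have hz : gA a eqv3 (i,p,j,q,k,t,r,h) = 0 := by
        subst e1
        simp [gA, eqv0, eqv3, mul_comm]
      rw [hz, mul_zero, mul_zero]
    · by_cases e2 : i = p ∧ j = q ∧ r = h
      · have hz : gA a eqv3 (i,p,j,q,k,t,r,h) = 0 := by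
          obtain ⟨g1, g2, g3⟩ := e2; subst g1; subst g2; subst g3
          simp [gA, eqv0, eqv3, mul_comm]
        rw [hz, mul_zero, mul_zero]
      · refine mul_le_mul_of_nonneg_right ?_ (hg _)
        exact MT_le hd1 hd12 hd23 hd34 hs i p j q k t r h (by tauto)
  have hm4 : MT d1 d2 d3 d4 s (i,p,j,q,k,t,r,h) * gA a eqv4 (i,p,j,q,k,t,r,h)
      ≤ NB d1 d2 d3 d4 s * gA a eqv4 (i,p,j,q,k,t,r,h) := by
    by_cases e1 : r = h
    · have hz : gA a eqv4 (i,p,j,q,k,t,r,h) = 0 := by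
        subst e1
        simp [gA, eqv0, eqv4, mul_comm]
      rw [hz, mul_zero, mul_zero]
    · by_cases e2 : i = p ∧ j = q ∧ k = t
      · have hz : gA a eqv4 (i,p,j,q,k,t,r,h) = 0 := by
          obtain ⟨g1, g2, g3⟩ := e2; subst g1; subst g2; subst g3
          simp [gA, eqv0, eqv4, mul_comm]
        rw [hz, mul_zero, mul_zero]
      · refine mul_le_mul_of_nonneg_right ?_ (hg _)
        exact MT_le hd1 hd12 hd23 hd34 hs i p j q k t r h (by tauto)
  have hm5 : MT d1 d2 d3 d4 s (i,p,j,q,k,t,r,h) * gA a eqv5 (i,p,j,q,k,t,r,h)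
      ≤ NB d1 d2 d3 d4 s * gA a eqv5 (i,p,j,q,k,t,r,h) := by
    by_cases e1 : i = p ∧ j = q
    · have hz : gA a eqv5 (i,p,j,q,k,t,r,h) = 0 := by
        obtain ⟨f1, f2⟩ := e1; subst f1; subst f2
        simp [gA, eqv0, eqv5, mul_comm]
      rw [hz, mul_zero, mul_zero]
    · by_cases e2 : k = t ∧ r = h
      · have hz : gA a eqv5 (i,p,j,q,k,t,r,h) = 0 := by
          obtain ⟨g1, g2⟩ := e2; subst g1; subst g2
          simp [gA, eqv0, eqv5, mul_comm]
        rw [hz, mul_zero, mul_zero]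
      · refine mul_le_mul_of_nonneg_right ?_ (hg _)
        exact MT_le hd1 hd12 hd23 hd34 hs i p j q k t r h (by tauto)
  have hm6 : MT d1 d2 d3 d4 s (i,p,j,q,k,t,r,h) * gA a eqv6 (i,p,j,q,k,t,r,h)
      ≤ NB d1 d2 d3 d4 s * gA a eqv6 (i,p,j,q,k,t,r,h) := by
    by_cases e1 : i = p ∧ k = t
    · have hz : gA a eqv6 (i,p,j,q,k,t,r,h) = 0 := by
        obtain ⟨f1, f2⟩ := e1; subst f1; subst f2
        simp [gA, eqv0, eqv6, mul_comm]
      rw [hz, mul_zero, mul_zero]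
    · by_cases e2 : j = q ∧ r = h
      · have hz : gA a eqv6 (i,p,j,q,k,t,r,h) = 0 := by
          obtain ⟨g1, g2⟩ := e2; subst g1; subst g2
          simp [gA, eqv0, eqv6, mul_comm]
        rw [hz, mul_zero, mul_zero]
      · refine mul_le_mul_of_nonneg_right ?_ (hg _)
        exact MT_le hd1 hd12 hd23 hd34 hs i p j q k t r h (by tauto)
  have hm7 : MT d1 d2 d3 d4 s (i,p,j,q,k,t,r,h) * gA a eqv7 (i,p,j,q,k,t,r,h)
      ≤ NB d1 d2 d3 d4 s * gA a eqv7 (i,p,j,q,k,t,r,h) := by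
    by_cases e1 : i = p ∧ r = h
    · have hz : gA a eqv7 (i,p,j,q,k,t,r,h) = 0 := by
        obtain ⟨f1, f2⟩ := e1; subst f1; subst f2
        simp [gA, eqv0, eqv7, mul_comm]
      rw [hz, mul_zero, mul_zero]
    · by_cases e2 : j = q ∧ k = t
      · have hz : gA a eqv7 (i,p,j,q,k,t,r,h) = 0 := by
          obtain ⟨g1, g2⟩ := e2; subst g1; subst g2
          simp [gA, eqv0, eqv7, mul_comm]
        rw [hz, mul_zero, mul_zero]
      · refine mul_le_mul_of_nonneg_right ?_ (hg _)
        exact MT_le hd1 hd12 hd23 hd34 hs i p j q k t r h (by tauto)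
  simp only [Gg, mul_add]
  exact add_le_add (add_le_add (add_le_add (add_le_add (add_le_add (add_le_add hm1 hm2) hm3) hm4) hm5) hm6) hm7


end Aux

/-- for `2 ≤ d1 ≤ d2 ≤ d3 ≤ d4`, `2 ≤ s ≤ d1` and a unit vector
`|φ⟩ = Σ a_{ijkr}|ijkr⟩` in `ℂ^{d1}⊗ℂ^{d2}⊗ℂ^{d3}⊗ℂ^{d4}`,
`C₄²(|φ⟩) ≥ [(d1−2 C s−2)(d2−2 C s−2)(d3−1 C s−1)(d4−1 C s−1)]⁻¹ Σ C₄²(|φ⟩_{s⊗s⊗s⊗s})`,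
the sum running over all choices of `s`-element subsets of the four factors. -/
theorem stmt_14 {s : ℕ} (hd1 : 2 ≤ d1) (hd12 : d1 ≤ d2) (hd23 : d2 ≤ d3)
    (hd34 : d3 ≤ d4) (hs : 2 ≤ s) (hsd : s ≤ d1)
    (a : Fin d1 × Fin d2 × Fin d3 × Fin d4 → ℂ)
    (ha : ∑ x, Complex.normSq (a x) = 1) :
    (pureC4 a) ^ 2 ≥
      ((Nat.choose (d1 - 2) (s - 2) * Nat.choose (d2 - 2) (s - 2) *
          Nat.choose (d3 - 1) (s - 1) * Nat.choose (d4 - 1) (s - 1) : ℕ) : ℝ)⁻¹ *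
        ∑ S1 : Finset (Fin d1), ∑ S2 : Finset (Fin d2),
          ∑ S3 : Finset (Fin d3), ∑ S4 : Finset (Fin d4),
          if h : S1.card = s ∧ S2.card = s ∧ S3.card = s ∧ S4.card = s then
            C4sqCoeff (subvec a S1 S2 S3 S4 h.1 h.2.1 h.2.2.1 h.2.2.2)
          else 0 := by
  classical
  have hsd2 : s ≤ d2 := hsd.trans hd12
  have hsd3 : s ≤ d3 := hsd2.trans hd23
  have hsd4 : s ≤ d4 := hsd3.trans hd34
  have hNB : ((Nat.choose (d1 - 2) (s - 2) * Nat.choose (d2 - 2) (s - 2) *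
      Nat.choose (d3 - 1) (s - 1) * Nat.choose (d4 - 1) (s - 1) : ℕ) : ℝ)
      = NB d1 d2 d3 d4 s := rfl
  rw [ge_iff_le, pure_eq a ha, hNB, exchange hs hsd hsd2 hsd3 hsd4 a]
  have hNBpos : (0:ℝ) < NB d1 d2 d3 d4 s := by
    have p1 : 0 < Nat.choose (d1 - 2) (s - 2) := Nat.choose_pos (by omega)
    have p2 : 0 < Nat.choose (d2 - 2) (s - 2) := Nat.choose_pos (by omega)
    have p3 : 0 < Nat.choose (d3 - 1) (s - 1) := Nat.choose_pos (by omega)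
    have p4 : 0 < Nat.choose (d4 - 1) (s - 1) := Nat.choose_pos (by omega)
    have : 0 < Nat.choose (d1 - 2) (s - 2) * Nat.choose (d2 - 2) (s - 2) *
        Nat.choose (d3 - 1) (s - 1) * Nat.choose (d4 - 1) (s - 1) :=
      Nat.mul_pos (Nat.mul_pos (Nat.mul_pos p1 p2) p3) p4
    rw [← hNB]
    exact_mod_cast this
  have hsum : ∑ z : BIdx d1 d2 d3 d4, MT d1 d2 d3 d4 s z * Gg a z
      ≤ ∑ z : BIdx d1 d2 d3 d4, NB d1 d2 d3 d4 s * Gg a z :=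
    Finset.sum_le_sum (fun z _ => tb hd1 hd12 hd23 hd34 hs a z)
  calc (NB d1 d2 d3 d4 s)⁻¹ * ((1/4) * ∑ z : BIdx d1 d2 d3 d4, MT d1 d2 d3 d4 s z * Gg a z)
      ≤ (NB d1 d2 d3 d4 s)⁻¹ * ((1/4) * ∑ z : BIdx d1 d2 d3 d4, NB d1 d2 d3 d4 s * Gg a z) := by
        have h4 : (0:ℝ) ≤ (1/4 : ℝ) := by norm_num
        exact mul_le_mul_of_nonneg_left
          (mul_le_mul_of_nonneg_left hsum h4) (inv_nonneg.mpr hNBpos.le)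
    _ = (1/4) * ∑ z : BIdx d1 d2 d3 d4, Gg a z := by
        rw [← Finset.mul_sum]
        field_simp
    _ = C4sqCoeff a := (C4_eq_G a).symm

end Stmt14
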